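/- Let v ∈ ℂ^N with v ≠ 0, let h be a positive-definite Hermitian N×N matrix, let P: ℂ^{1×N} → ℂ be a homogeneous polynomial function of degree p on row vectors, and let Q: ℂ^N → ℂ be any polynomial function. Then for all Hermitian N×N matrices H_0, …, H_{N−1}: Σ_{j=0}^{N−1} (−1)^j · (d/dt at t = 0 of [ (v*(h+tH_j)v)^{−N−p} · conj(Q(v)) · P(v*(h+tH_j)) · pbar(v, h+tH_j)(H_0, …, H_{j−1}, H_{j+1}, …, H_{N−1}) ]) = 0. In other words, the (N−1)-form (v*hv)^{−N−p} conj(Q(v)) P(v*h) p̄(v) on positive-definite Hermitian matrices is closed. -/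

import Mathlib

open Matrix BigOperators

noncomputable section

/-- The `i`-th entry of the row vector `v* h`, where `v*` is the conjugate transpose of the
column vector `v`. -/
def vstarM {N : ℕ} (v : Fin N → ℂ) (h : Matrix (Fin N) (Fin N) ℂ) (i : Fin N) : ℂ :=
  ∑ j, (starRingEnd ℂ) (v j) * h j i

/-- The scalar `v* h v`. -/
def vhv {N : ℕ} (v : Fin N → ℂ) (h : Matrix (Fin N) (Fin N) ℂ) : ℂ :=
  ∑ i, vstarM v h i * v i

/-- `pbar(v,h)(H_1,…,H_{N−1})` : the value of the `(N-1)`-form `p̄(v)` at the point `h` on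
the tangent vectors `H_1,…,H_{N-1}`.  Here `N = n+2`; the matrix `M⁽ⁱ⁾` has `(k,l)`-entry
`(v*H_l)_{r_k}` where `r` is the decreasing enumeration of `{0,…,N-1}` omitting `i`
(`r k = Fin.rev ((Fin.rev i).succAbove k)`), and the sign `(−1)^{i−1}` (1-based) is
`(−1)^{i}` in 0-based indexing. -/
def pbar {n : ℕ} (v : Fin (n + 2) → ℂ) (h : Matrix (Fin (n + 2)) (Fin (n + 2)) ℂ)
    (H : Fin (n + 1) → Matrix (Fin (n + 2)) (Fin (n + 2)) ℂ) : ℂ :=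
  2 * (-1 : ℂ) ^ ((n + 2) * (n + 1) / 2) *
    ∑ i : Fin (n + 2), (-1 : ℂ) ^ (i : ℕ) * vstarM v h i *
      Matrix.det (Matrix.of fun k l : Fin (n + 1) =>
        vstarM v (H l) (Fin.rev ((Fin.rev i).succAbove k)))

/-- `dpbar(v)(H_1,…,H_N) = 2N(−1)^{(N+2)(N−1)/2} det M` where `M` has `(k,l)`-entry
`(v*H_l)_{N+1−k}` (1-based), i.e. `(v*H_l)_{Fin.rev k}` in 0-based indexing. -/
def dpbar {n : ℕ} (v : Fin (n + 2) → ℂ)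
    (H : Fin (n + 2) → Matrix (Fin (n + 2)) (Fin (n + 2)) ℂ) : ℂ :=
  2 * (n + 2) * (-1 : ℂ) ^ ((n + 4) * (n + 1) / 2) *
    Matrix.det (Matrix.of fun k l : Fin (n + 2) => vstarM v (H l) (Fin.rev k))

section AuxLemmas

open MvPolynomial

lemma vstarM_add_smul {N : ℕ} (v : Fin N → ℂ) (h H : Matrix (Fin N) (Fin N) ℂ) (t : ℂ) :
    vstarM v (h + t • H) = fun i => vstarM v h i + t * vstarM v H i := by
  funext i
  simp [vstarM, Matrix.add_apply, Matrix.smul_apply, smul_eq_mul, mul_add,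
    Finset.sum_add_distrib, Finset.mul_sum, mul_left_comm]

lemma vhv_add_smul {N : ℕ} (v : Fin N → ℂ) (h H : Matrix (Fin N) (Fin N) ℂ) (t : ℂ) :
    vhv v (h + t • H) = vhv v h + t * vhv v H := by
  simp [vhv, vstarM_add_smul, add_mul, Finset.sum_add_distrib, Finset.mul_sum, mul_assoc]

lemma hasDerivAt_eval_line {N : ℕ} (w u : Fin N → ℂ) (P : MvPolynomial (Fin N) ℂ) (z : ℂ) :
    HasDerivAt (fun z : ℂ => eval (fun i => w i + z * u i) P)
      (∑ i, u i * eval (fun i => w i + z * u i) (pderiv i P)) z := by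
  induction P using MvPolynomial.induction_on with
  | C a => simpa using hasDerivAt_const z ((a : ℂ))
  | add P Q hp hq =>
      simpa [mul_add, Finset.sum_add_distrib] using hp.fun_add hq
  | mul_X P i hp =>
      have h2 : HasDerivAt (fun z : ℂ => w i + z * u i) (u i) z := by
        simpa using ((hasDerivAt_id z).mul_const (u i)).const_add (w i)
      have := hp.fun_mul h2
      convert! this using 1
      · funext y; simp [mul_comm]
      · simp only [pderiv_mul, pderiv_X, eval_add, eval_mul, eval_X, Pi.single_apply,
          apply_ite (eval fun i => w i + z * u i), mul_ite, mul_one,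
          mul_zero, mul_add, Finset.sum_add_distrib, Finset.mem_univ,
          if_true, Finset.sum_mul]
        ring_nf
        simp only [_root_.map_zero, _root_.map_one, mul_zero, mul_one, Finset.sum_ite_eq, Finset.mem_univ,
          if_true]
        ring

lemma eval_homog_smul {N p : ℕ} (P : MvPolynomial (Fin N) ℂ) (hP : P.IsHomogeneous p)
    (c : ℂ) (x : Fin N → ℂ) :
    eval (fun i => c * x i) P = c ^ p * eval x P := by
  rw [eval_eq', eval_eq', Finset.mul_sum]
  refine Finset.sum_congr rfl fun d hd => ?_
  have hdeg : ∑ i, d i = p := by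
    have h1 := hP (mem_support_iff.mp hd)
    rw [← h1, show (1 : Fin N → ℕ) = fun _ => 1 from rfl, ← Finsupp.degree_eq_weight_one,
      Finsupp.degree_apply]
    exact (Finset.sum_subset (Finset.subset_univ _)
      (fun i _ hi => Finsupp.notMem_support_iff.mp hi)).symm
  rw [Finset.prod_congr rfl (fun i _ => mul_pow (c) (x i) (d i)),
    Finset.prod_mul_distrib, Finset.prod_pow_eq_pow_sum, hdeg]
  ring

lemma euler_identity {N p : ℕ} (P : MvPolynomial (Fin N) ℂ) (hP : P.IsHomogeneous p)
    (x : Fin N → ℂ) :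
    ∑ i, x i * eval x (pderiv i P) = (p : ℂ) * eval x P := by
  have h1 := hasDerivAt_eval_line x x P 0
  have heq : (fun z : ℂ => eval (fun i => x i + z * x i) P)
      = fun z : ℂ => (1 + z) ^ p * eval x P := by
    funext z
    have harg : (fun i => x i + z * x i) = fun i => (1 + z) * x i := by
      funext i; ring
    rw [harg, eval_homog_smul P hP]
  rw [heq] at h1
  have h2 : HasDerivAt (fun z : ℂ => (1 + z) ^ p * eval x P) ((p : ℂ) * eval x P) 0 := by
    have hl : HasDerivAt (fun z : ℂ => 1 + z) 1 0 := by
      simpa using (hasDerivAt_id (0 : ℂ)).const_add 1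
    have hpow := (hasDerivAt_pow p ((1 : ℂ) + 0)).comp 0 hl
    simpa using hpow.mul_const (eval x P)
  have := h1.unique h2
  simpa using this

lemma key_det {N : ℕ} (c : Fin N → ℂ) (y : Fin (N + 1) → Fin N → ℂ) :
    ∑ l : Fin (N + 1), (-1 : ℂ) ^ (l : ℕ) * (∑ i, c i * y l i) *
      Matrix.det (Matrix.of fun k m : Fin N => y (l.succAbove m) (Fin.rev k)) = 0 := by
  classical
  set B : Matrix (Fin (N + 1)) (Fin (N + 1)) ℂ :=
    Matrix.of (Fin.cons (fun l => ∑ i, c i * y l i) (fun k l => y l (Fin.rev k))) with hB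
  have hexp : B.det = ∑ l : Fin (N + 1), (-1 : ℂ) ^ (l : ℕ) * (∑ i, c i * y l i) *
      Matrix.det (Matrix.of fun k m : Fin N => y (l.succAbove m) (Fin.rev k)) := by
    rw [Matrix.det_succ_row_zero]
    refine Finset.sum_congr rfl fun l _ => ?_
    have e1 : B 0 l = ∑ i, c i * y l i := by simp [hB]
    have e2 : B.submatrix Fin.succ l.succAbove
        = Matrix.of fun k m : Fin N => y (l.succAbove m) (Fin.rev k) := by
      ext k m
      simp [hB, Fin.cons_succ]
    rw [e1, e2]
  rw [← hexp]
  -- the first row is a linear combination of the others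
  set c' : Fin (N + 1) → ℂ := Fin.cons 0 (fun k => c (Fin.rev k)) with hc'
  have hrow : ∑ r, c' r • B r = B 0 := by
    rw [Fin.sum_univ_succ]
    funext l
    simp only [hc', Fin.cons_zero, Fin.cons_succ, zero_smul, zero_add, Finset.sum_apply,
      Pi.smul_apply, smul_eq_mul]
    have : B 0 l = ∑ i, c i * y l i := by simp [hB]
    rw [this]
    refine Fintype.sum_bijective Fin.rev Fin.rev_bijective _ _ fun i => ?_
    simp [hB, Fin.cons_succ, Fin.rev_rev]
  have h0 : B.updateRow 0 (∑ r, c' r • B r) = B := by rw [hrow, Matrix.updateRow_eq_self]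
  have := Matrix.det_updateRow_sum B 0 c'
  rw [h0] at this
  simpa [hc'] using this

lemma neg_one_pow_rev {n : ℕ} (i : Fin (n + 2)) :
    (-1 : ℂ) ^ ((Fin.rev i : Fin (n + 2)) : ℕ) = (-1 : ℂ) ^ (n + 1) * (-1 : ℂ) ^ (i : ℕ) := by
  have hsum : ((Fin.rev i : Fin (n + 2)) : ℕ) + (i : ℕ) = n + 1 := by
    rw [Fin.val_rev]; omega
  have h1 : (-1 : ℂ) ^ ((Fin.rev i : Fin (n + 2)) : ℕ) * (-1 : ℂ) ^ (i : ℕ)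
      = (-1 : ℂ) ^ (n + 1) := by rw [← pow_add, hsum]
  have h2 : (-1 : ℂ) ^ (i : ℕ) * (-1 : ℂ) ^ (i : ℕ) = 1 := by
    rw [← pow_add, ← two_mul, pow_mul]; norm_num
  calc (-1 : ℂ) ^ ((Fin.rev i : Fin (n + 2)) : ℕ)
      = (-1 : ℂ) ^ ((Fin.rev i : Fin (n + 2)) : ℕ) * ((-1 : ℂ) ^ (i : ℕ) * (-1 : ℂ) ^ (i : ℕ)) := by
        rw [h2, mul_one]
    _ = (-1 : ℂ) ^ (n + 1) * (-1 : ℂ) ^ (i : ℕ) := by rw [← mul_assoc, h1]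

/-- Laplace relation between the `pbar`-style sum and a full determinant with `u` as
first column. -/

lemma L_eq {n : ℕ} (u : Fin (n + 2) → ℂ) (Z : Fin (n + 1) → Fin (n + 2) → ℂ) :
    ∑ i : Fin (n + 2), (-1 : ℂ) ^ (i : ℕ) * u i *
      Matrix.det (Matrix.of fun k l : Fin (n + 1) => Z l (Fin.rev ((Fin.rev i).succAbove k)))
    = (-1 : ℂ) ^ (n + 1) *
      Matrix.det (Matrix.of fun k m : Fin (n + 2) => (Fin.cons u Z : Fin (n + 2) → Fin (n + 2) → ℂ) m (Fin.rev k)) := by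
  rw [Matrix.det_succ_column_zero, Finset.mul_sum]
  refine Fintype.sum_bijective Fin.rev Fin.rev_bijective _ _ fun i => ?_
  have e2 : ((Matrix.of fun k m : Fin (n + 2) => (Fin.cons u Z : Fin (n + 2) → Fin (n + 2) → ℂ) m (Fin.rev k)).submatrix
        (Fin.rev i).succAbove Fin.succ)
      = Matrix.of fun k l : Fin (n + 1) => Z l (Fin.rev ((Fin.rev i).succAbove k)) := by
    ext k l
    simp [Fin.cons_succ]
  rw [e2]
  have e1 : (Matrix.of fun k m : Fin (n + 2) => (Fin.cons u Z : Fin (n + 2) → Fin (n + 2) → ℂ) m (Fin.rev k)) (Fin.rev i) 0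
      = u i := by simp [Fin.rev_rev]
  rw [e1, neg_one_pow_rev]
  have : (-1 : ℂ) ^ (n * 2) = 1 := by rw [mul_comm, pow_mul]; norm_num
  ring_nf
  rw [this, mul_one]

lemma det_cons_self {n : ℕ} (W : Fin (n + 2) → Fin (n + 2) → ℂ) (j : Fin (n + 2)) :
    Matrix.det (Matrix.of fun k m : Fin (n + 2) =>
        (Fin.cons (W j) (fun l => W (j.succAbove l)) : Fin (n + 2) → Fin (n + 2) → ℂ) m (Fin.rev k))
      = (-1 : ℂ) ^ (j : ℕ) *
        Matrix.det (Matrix.of fun k m : Fin (n + 2) => W m (Fin.rev k)) := by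
  have hcol : ∀ m, (Fin.cons (W j) (fun l => W (j.succAbove l)) : Fin (n + 2) → Fin (n + 2) → ℂ) m
      = W (j.cycleRange.symm m) := by
    intro m
    induction m using Fin.cases with
    | zero => simp [Fin.cycleRange_symm_zero]
    | succ m => simp [Fin.cycleRange_symm_succ]
  have hmat : (Matrix.of fun k m : Fin (n + 2) =>
        (Fin.cons (W j) (fun l => W (j.succAbove l)) : Fin (n + 2) → Fin (n + 2) → ℂ) m (Fin.rev k))
      = (Matrix.of fun k m : Fin (n + 2) => W m (Fin.rev k)).submatrix id
          ⇑(j.cycleRange.symm) := by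
    ext k m
    simp [hcol]
  rw [hmat, Matrix.det_permute']
  congr 1
  rw [Equiv.Perm.sign_symm, Fin.sign_cycleRange]
  push_cast
  norm_num

lemma star_identity {n : ℕ} (c w : Fin (n + 2) → ℂ) (W : Fin (n + 2) → Fin (n + 2) → ℂ) :
    ∑ j : Fin (n + 2), (-1 : ℂ) ^ (j : ℕ) * (∑ i, c i * W j i) *
      Matrix.det (Matrix.of fun k m : Fin (n + 2) =>
        (Fin.cons w (fun l => W (j.succAbove l)) : Fin (n + 2) → Fin (n + 2) → ℂ) m (Fin.rev k))
    = (∑ i, c i * w i) *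
      Matrix.det (Matrix.of fun k m : Fin (n + 2) => W m (Fin.rev k)) := by
  have h := key_det c (Fin.cons w W)
  rw [Fin.sum_univ_succ] at h
  have e0 : (Matrix.of fun k m : Fin (n + 2) =>
        (Fin.cons w W : Fin (n + 3) → Fin (n + 2) → ℂ) ((0 : Fin (n + 3)).succAbove m) (Fin.rev k))
      = Matrix.of fun k m : Fin (n + 2) => W m (Fin.rev k) := by
    ext k m
    simp [Fin.succAbove_zero, Fin.cons_succ]
  have esucc : ∀ j : Fin (n + 2), (Matrix.of fun k m : Fin (n + 2) =>
        (Fin.cons w W : Fin (n + 3) → Fin (n + 2) → ℂ) ((Fin.succ j).succAbove m) (Fin.rev k))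
      = Matrix.of fun k m : Fin (n + 2) =>
        (Fin.cons w (fun l => W (j.succAbove l)) : Fin (n + 2) → Fin (n + 2) → ℂ) m (Fin.rev k) := by
    intro j
    ext k m
    induction m using Fin.cases with
    | zero => simp
    | succ m => simp [Fin.succ_succAbove_succ, Fin.cons_succ]
  rw [e0] at h
  have hsum : ∑ j : Fin (n + 2), (-1 : ℂ) ^ ((Fin.succ j : Fin (n + 3)) : ℕ) *
        (∑ i, c i * (Fin.cons w W : Fin (n + 3) → Fin (n + 2) → ℂ) (Fin.succ j) i) *
        Matrix.det (Matrix.of fun k m : Fin (n + 2) =>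
          (Fin.cons w W : Fin (n + 3) → Fin (n + 2) → ℂ) ((Fin.succ j).succAbove m) (Fin.rev k))
      = ∑ j : Fin (n + 2), -((-1 : ℂ) ^ (j : ℕ) * (∑ i, c i * W j i) *
        Matrix.det (Matrix.of fun k m : Fin (n + 2) =>
          (Fin.cons w (fun l => W (j.succAbove l)) : Fin (n + 2) → Fin (n + 2) → ℂ) m (Fin.rev k))) := by
    refine Finset.sum_congr rfl fun j _ => ?_
    rw [esucc j]
    simp only [Fin.cons_succ, Fin.val_succ, pow_succ]
    ring
  rw [hsum, Finset.sum_neg_distrib] at h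
  simp only [Fin.val_zero, pow_zero, one_mul, Fin.cons_zero] at h
  linear_combination -h

lemma pbar_add_smul {n : ℕ} (v : Fin (n + 2) → ℂ)
    (h G : Matrix (Fin (n + 2)) (Fin (n + 2)) ℂ) (t : ℂ)
    (K : Fin (n + 1) → Matrix (Fin (n + 2)) (Fin (n + 2)) ℂ) :
    pbar v (h + t • G) K = pbar v h K + t * pbar v G K := by
  unfold pbar
  rw [vstarM_add_smul]
  simp only [add_mul, mul_add, Finset.sum_add_distrib, Finset.mul_sum]
  congr 1
  exact Finset.sum_congr rfl fun x _ => by ring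

open scoped ComplexOrder

end AuxLemmas

open scoped ComplexOrder

open MvPolynomial in
/-- for `v ≠ 0`, `h` positive definite Hermitian, `P` a homogeneous polynomial
of degree `p` on row vectors and `Q` any polynomial on `ℂ^N`, the `(N−1)`-form
`(v*hv)^{−N−p} conj(Q(v)) P(v*h) p̄(v)` on positive definite Hermitian matrices is closed:
for all Hermitian `H_0,…,H_{N−1}`,
`Σ_j (−1)^j ∂_t|_{t=0}[ (v*(h+tH_j)v)^{−N−p} conj(Q(v)) P(v*(h+tH_j))
    pbar(v,h+tH_j)(H_0,…,Ĥ_j,…,H_{N−1}) ] = 0`. -/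
theorem pbar_form_with_coeffs_closed {n : ℕ} (p : ℕ) (v : Fin (n + 2) → ℂ) (hv : v ≠ 0)
    (h : Matrix (Fin (n + 2)) (Fin (n + 2)) ℂ) (hh : h.PosDef)
    (P : MvPolynomial (Fin (n + 2)) ℂ) (hP : P.IsHomogeneous p)
    (Q : MvPolynomial (Fin (n + 2)) ℂ)
    (H : Fin (n + 2) → Matrix (Fin (n + 2)) (Fin (n + 2)) ℂ)
    (hH : ∀ j, (H j).IsHermitian) :
    ∑ j : Fin (n + 2), (-1 : ℂ) ^ (j : ℕ) *
        deriv (fun t : ℝ =>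
          (vhv v (h + (t : ℂ) • H j)) ^ (-(n + 2 : ℤ) - (p : ℤ)) *
            (starRingEnd ℂ) (MvPolynomial.eval v Q) *
            MvPolynomial.eval (vstarM v (h + (t : ℂ) • H j)) P *
            pbar v (h + (t : ℂ) • H j) (fun k => H (j.succAbove k))) 0
      = 0 := by
  -- notation
  set m : ℤ := -(n + 2 : ℤ) - (p : ℤ) with hm
  set s : ℂ := vhv v h with hsdef
  set w : Fin (n + 2) → ℂ := vstarM v h with hwdef
  set Cq : ℂ := (starRingEnd ℂ) (MvPolynomial.eval v Q) with hCq
  -- s ≠ 0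
  have hs : s ≠ 0 := by
    have hpos : 0 < star v ⬝ᵥ (h *ᵥ v) := hh.dotProduct_mulVec_pos hv
    have : s = star v ⬝ᵥ (h *ᵥ v) := by
      rw [hsdef]
      simp only [vhv, vstarM, dotProduct, mulVec, Finset.sum_mul, Finset.mul_sum]
      rw [Finset.sum_comm]
      refine Finset.sum_congr rfl fun i _ => Finset.sum_congr rfl fun j _ => ?_
      simp [Pi.star_apply, RCLike.star_def, dotProduct]
      ring
    rw [this]
    exact hpos.ne'
  -- the derivative of each term
  have key : ∀ j : Fin (n + 2),
      deriv (fun t : ℝ =>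
          (vhv v (h + (t : ℂ) • H j)) ^ m * Cq *
            MvPolynomial.eval (vstarM v (h + (t : ℂ) • H j)) P *
            pbar v (h + (t : ℂ) • H j) (fun k => H (j.succAbove k))) 0
      = ((m : ℂ) * s ^ (m - 1) * vhv v (H j)) * Cq * eval w P
            * pbar v h (fun k => H (j.succAbove k))
        + s ^ m * Cq * (∑ i, vstarM v (H j) i * eval w (pderiv i P))
            * pbar v h (fun k => H (j.succAbove k))
        + s ^ m * Cq * eval w P * pbar v (H j) (fun k => H (j.succAbove k)) := by
    intro j
    set a : ℂ := vhv v (H j) with ha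
    set B : ℂ := pbar v h (fun k => H (j.succAbove k)) with hBdef
    set B' : ℂ := pbar v (H j) (fun k => H (j.succAbove k)) with hB'def
    have h1 : HasDerivAt (fun z : ℂ => (s + z * a) ^ m) ((m : ℂ) * s ^ (m - 1) * a) 0 := by
      have hlin : HasDerivAt (fun z : ℂ => s + z * a) a 0 := by
        simpa using ((hasDerivAt_id (0 : ℂ)).mul_const a).const_add s
      have hz : HasDerivAt (fun x : ℂ => x ^ m) ((m : ℂ) * s ^ (m - 1))
          ((fun z : ℂ => s + z * a) 0) := by
        simpa using hasDerivAt_zpow m s (Or.inl hs)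
      simpa [Function.comp_def] using hz.comp 0 hlin
    have h2 : HasDerivAt (fun z : ℂ => eval (fun i => w i + z * vstarM v (H j) i) P)
        (∑ i, vstarM v (H j) i * eval w (pderiv i P)) 0 := by
      simpa using hasDerivAt_eval_line w (vstarM v (H j)) P 0
    have h3 : HasDerivAt (fun z : ℂ => B + z * B') B' 0 := by
      simpa using ((hasDerivAt_id (0 : ℂ)).mul_const B').const_add B
    have hbig := ((h1.mul_const Cq).fun_mul h2).fun_mul h3
    have hbig2 : HasDerivAt (fun z : ℂ => (s + z * a) ^ m * Cq
        * eval (fun i => w i + z * vstarM v (H j) i) P * (B + z * B'))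
        (((m : ℂ) * s ^ (m - 1) * a) * Cq * eval w P * B
          + s ^ m * Cq * (∑ i, vstarM v (H j) i * eval w (pderiv i P)) * B
          + s ^ m * Cq * eval w P * B') 0 := by
      convert! hbig using 1
      simp
      ring
    have hfun : (fun t : ℝ =>
          (vhv v (h + (t : ℂ) • H j)) ^ m * Cq *
            MvPolynomial.eval (vstarM v (h + (t : ℂ) • H j)) P *
            pbar v (h + (t : ℂ) • H j) (fun k => H (j.succAbove k)))
        = (fun t : ℝ => (s + (t : ℂ) * a) ^ m * Cq
            * eval (fun i => w i + (t : ℂ) * vstarM v (H j) i) P * (B + (t : ℂ) * B')) := by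
      funext t
      rw [vhv_add_smul, vstarM_add_smul, pbar_add_smul]
    rw [hfun]
    have hbig3 : HasDerivAt (fun z : ℂ => (s + z * a) ^ m * Cq
        * eval (fun i => w i + z * vstarM v (H j) i) P * (B + z * B'))
        (((m : ℂ) * s ^ (m - 1) * a) * Cq * eval w P * B
          + s ^ m * Cq * (∑ i, vstarM v (H j) i * eval w (pderiv i P)) * B
          + s ^ m * Cq * eval w P * B') ((0 : ℝ) : ℂ) := by
      rw [Complex.ofReal_zero]; exact hbig2
    exact hbig3.comp_ofReal.deriv
  simp only [key]
  -- rewrite the pbar values as cons-determinants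
  have hB : ∀ j : Fin (n + 2), pbar v h (fun k => H (j.succAbove k))
      = (2 * (-1 : ℂ) ^ ((n + 2) * (n + 1) / 2)) * ((-1 : ℂ) ^ (n + 1) *
        Matrix.det (Matrix.of fun k m : Fin (n + 2) =>
          (Fin.cons w (fun l => vstarM v (H (j.succAbove l))) : Fin (n + 2) → Fin (n + 2) → ℂ)
            m (Fin.rev k))) := by
    intro j
    have hLj := L_eq w (fun l => vstarM v (H (j.succAbove l)))
    beta_reduce at hLj
    unfold pbar
    rw [← hwdef, hLj]
  have hB' : ∀ j : Fin (n + 2), pbar v (H j) (fun k => H (j.succAbove k))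
      = (2 * (-1 : ℂ) ^ ((n + 2) * (n + 1) / 2)) * ((-1 : ℂ) ^ (n + 1) *
        Matrix.det (Matrix.of fun k m : Fin (n + 2) =>
          (Fin.cons (vstarM v (H j)) (fun l => vstarM v (H (j.succAbove l)))
            : Fin (n + 2) → Fin (n + 2) → ℂ) m (Fin.rev k))) := by
    intro j
    have hLj := L_eq (vstarM v (H j)) (fun l => vstarM v (H (j.succAbove l)))
    beta_reduce at hLj
    unfold pbar
    rw [hLj]
  simp only [hB, hB']
  -- abbreviations for the determinants
  set c0 : ℂ := 2 * (-1 : ℂ) ^ ((n + 2) * (n + 1) / 2) with hc0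
  -- the three summation identities
  have S1 : ∑ j : Fin (n + 2), (-1 : ℂ) ^ (j : ℕ) * vhv v (H j) *
      Matrix.det (Matrix.of fun k m : Fin (n + 2) =>
        (Fin.cons w (fun l => vstarM v (H (j.succAbove l))) : Fin (n + 2) → Fin (n + 2) → ℂ)
          m (Fin.rev k))
      = s * Matrix.det (Matrix.of fun k m : Fin (n + 2) => vstarM v (H m) (Fin.rev k)) := by
    have hstar := star_identity v w (fun j => vstarM v (H j))
    beta_reduce at hstar
    have e1 : ∀ j : Fin (n + 2), vhv v (H j) = ∑ i, v i * vstarM v (H j) i := by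
      intro j
      exact Finset.sum_congr rfl fun i _ => mul_comm _ _
    have e2 : s = ∑ i, v i * w i := by
      rw [hsdef]
      exact Finset.sum_congr rfl fun i _ => mul_comm _ _
    rw [e2, ← hstar]
    exact Finset.sum_congr rfl fun j _ => by rw [e1 j]
  have S2 : ∑ j : Fin (n + 2), (-1 : ℂ) ^ (j : ℕ) *
      (∑ i, vstarM v (H j) i * eval w (pderiv i P)) *
      Matrix.det (Matrix.of fun k m : Fin (n + 2) =>
        (Fin.cons w (fun l => vstarM v (H (j.succAbove l))) : Fin (n + 2) → Fin (n + 2) → ℂ)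
          m (Fin.rev k))
      = (p : ℂ) * eval w P *
        Matrix.det (Matrix.of fun k m : Fin (n + 2) => vstarM v (H m) (Fin.rev k)) := by
    have hstar := star_identity (fun i => eval w (pderiv i P)) w (fun j => vstarM v (H j))
    beta_reduce at hstar
    have e3 : (∑ i, eval w (pderiv i P) * w i) = (p : ℂ) * eval w P := by
      rw [← euler_identity P hP w]
      exact Finset.sum_congr rfl fun i _ => mul_comm _ _
    rw [← e3, ← hstar]
    refine Finset.sum_congr rfl fun j _ => ?_
    congr 2
    exact Finset.sum_congr rfl fun i _ => mul_comm _ _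
  have S3 : ∑ j : Fin (n + 2), (-1 : ℂ) ^ (j : ℕ) *
      Matrix.det (Matrix.of fun k m : Fin (n + 2) =>
        (Fin.cons (vstarM v (H j)) (fun l => vstarM v (H (j.succAbove l)))
          : Fin (n + 2) → Fin (n + 2) → ℂ) m (Fin.rev k))
      = ((n : ℂ) + 2) *
        Matrix.det (Matrix.of fun k m : Fin (n + 2) => vstarM v (H m) (Fin.rev k)) := by
    have hterm : ∀ j : Fin (n + 2), (-1 : ℂ) ^ (j : ℕ) *
        Matrix.det (Matrix.of fun k m : Fin (n + 2) =>
          (Fin.cons (vstarM v (H j)) (fun l => vstarM v (H (j.succAbove l)))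
            : Fin (n + 2) → Fin (n + 2) → ℂ) m (Fin.rev k))
        = Matrix.det (Matrix.of fun k m : Fin (n + 2) => vstarM v (H m) (Fin.rev k)) := by
      intro j
      have hcs := det_cons_self (fun j => vstarM v (H j)) j
      beta_reduce at hcs
      rw [hcs, ← mul_assoc, ← pow_add]
      rw [Even.neg_one_pow ⟨(j : ℕ), rfl⟩, one_mul]
    rw [Finset.sum_congr rfl fun j _ => hterm j]
    rw [Finset.sum_const, Finset.card_univ, Fintype.card_fin, nsmul_eq_mul]
    push_cast
    ring
  -- put everything together
  have hsm : s ^ m = s ^ (m - 1) * s := by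
    rw [← zpow_add_one₀ hs, sub_add_cancel]
  have hterm2 : ∀ j : Fin (n + 2), (-1 : ℂ) ^ (j : ℕ) *
      ((m : ℂ) * s ^ (m - 1) * vhv v (H j) * Cq * eval w P *
          (c0 * ((-1 : ℂ) ^ (n + 1) *
            Matrix.det (Matrix.of fun k m : Fin (n + 2) =>
              (Fin.cons w (fun l => vstarM v (H (j.succAbove l)))
                : Fin (n + 2) → Fin (n + 2) → ℂ) m (Fin.rev k)))) +
        s ^ m * Cq * (∑ i, vstarM v (H j) i * eval w (pderiv i P)) *
          (c0 * ((-1 : ℂ) ^ (n + 1) *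
            Matrix.det (Matrix.of fun k m : Fin (n + 2) =>
              (Fin.cons w (fun l => vstarM v (H (j.succAbove l)))
                : Fin (n + 2) → Fin (n + 2) → ℂ) m (Fin.rev k)))) +
        s ^ m * Cq * eval w P *
          (c0 * ((-1 : ℂ) ^ (n + 1) *
            Matrix.det (Matrix.of fun k m : Fin (n + 2) =>
              (Fin.cons (vstarM v (H j)) (fun l => vstarM v (H (j.succAbove l)))
                : Fin (n + 2) → Fin (n + 2) → ℂ) m (Fin.rev k)))))
      = (s ^ (m - 1) * Cq * c0 * (-1 : ℂ) ^ (n + 1) * ((m : ℂ) * eval w P)) *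
          ((-1 : ℂ) ^ (j : ℕ) * vhv v (H j) *
            Matrix.det (Matrix.of fun k m : Fin (n + 2) =>
              (Fin.cons w (fun l => vstarM v (H (j.succAbove l)))
                : Fin (n + 2) → Fin (n + 2) → ℂ) m (Fin.rev k)))
        + (s ^ (m - 1) * Cq * c0 * (-1 : ℂ) ^ (n + 1) * s) *
          ((-1 : ℂ) ^ (j : ℕ) * (∑ i, vstarM v (H j) i * eval w (pderiv i P)) *
            Matrix.det (Matrix.of fun k m : Fin (n + 2) =>
              (Fin.cons w (fun l => vstarM v (H (j.succAbove l)))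
                : Fin (n + 2) → Fin (n + 2) → ℂ) m (Fin.rev k)))
        + (s ^ (m - 1) * Cq * c0 * (-1 : ℂ) ^ (n + 1) * s * eval w P) *
          ((-1 : ℂ) ^ (j : ℕ) *
            Matrix.det (Matrix.of fun k m : Fin (n + 2) =>
              (Fin.cons (vstarM v (H j)) (fun l => vstarM v (H (j.succAbove l)))
                : Fin (n + 2) → Fin (n + 2) → ℂ) m (Fin.rev k))) := by
    intro j
    rw [hsm]
    ring
  rw [Finset.sum_congr rfl fun j _ => hterm2 j]
  rw [Finset.sum_add_distrib, Finset.sum_add_distrib, ← Finset.mul_sum, ← Finset.mul_sum,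
    ← Finset.mul_sum, S1, S2, S3]
  have hmc : (m : ℂ) + (p : ℂ) + ((n : ℂ) + 2) = 0 := by
    rw [hm]
    push_cast
    ring
  linear_combination (s ^ (m - 1) * Cq * c0 * (-1 : ℂ) ^ (n + 1) * s * eval w P *
    Matrix.det (Matrix.of fun k m : Fin (n + 2) => vstarM v (H m) (Fin.rev k))) * hmc

end
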